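/- For each t ∈ ℂ, the bracket defined on the span of {e_i : i ≥ 1} by [e₂, e_j]³_t = (j−2)e_{j+2} + t j e_j for j ≠ 2, and [e_i, e_j]³_t = (j−i)e_{i+j} when i ≠ 2 and j ≠ 2 (extended antisymmetrically), satisfies the Jacobi identity. -/

import Mathlib

/-- Structure constants of the third deformation of `L₁`:
`[e₂, e_j]³_t = (j−2) e_{j+2} + t j e_j` for `j ≠ 2`, `[e_i, e_j]³_t = (j−i) e_{i+j}` for
`i ≠ 2, j ≠ 2`, extended antisymmetrically (and `[e₂,e₂] = 0`). -/
noncomputable def c13 (t : ℂ) (i j : ℕ+) : ℕ+ →₀ ℂ :=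
  if i = 2 ∧ j = 2 then 0
  else if i = 2 then
    (((j : ℕ) : ℂ) - 2) • Finsupp.single (j + 2) (1 : ℂ)
      + (t * ((j : ℕ) : ℂ)) • Finsupp.single j (1 : ℂ)
  else if j = 2 then
    -((((i : ℕ) : ℂ) - 2) • Finsupp.single (i + 2) (1 : ℂ)
      + (t * ((i : ℕ) : ℂ)) • Finsupp.single i (1 : ℂ))
  else (((j : ℕ) : ℂ) - ((i : ℕ) : ℂ)) • Finsupp.single (i + j) (1 : ℂ)

/-- The bilinear extension of `c13`. -/
noncomputable def L1br3 (t : ℂ) : (ℕ+ →₀ ℂ) →ₗ[ℂ] (ℕ+ →₀ ℂ) →ₗ[ℂ] (ℕ+ →₀ ℂ) :=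
  Finsupp.lsum ℂ fun i => LinearMap.toSpanSingleton ℂ _
    (Finsupp.lsum ℂ fun j => LinearMap.toSpanSingleton ℂ _ (c13 t i j))

noncomputable section Stmt13Aux

lemma c13_two_two (t : ℂ) : c13 t 2 2 = 0 := by simp [c13]

lemma c13_two_left (t : ℂ) (j : ℕ+) (hj : j ≠ 2) :
    c13 t 2 j = (((j : ℕ) : ℂ) - 2) • Finsupp.single (j + 2) (1 : ℂ)
      + (t * ((j : ℕ) : ℂ)) • Finsupp.single j (1 : ℂ) := by
  rw [c13, if_neg (by simp [hj]), if_pos rfl]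

lemma c13_two_right (t : ℂ) (i : ℕ+) (hi : i ≠ 2) :
    c13 t i 2 = -((((i : ℕ) : ℂ) - 2) • Finsupp.single (i + 2) (1 : ℂ)
      + (t * ((i : ℕ) : ℂ)) • Finsupp.single i (1 : ℂ)) := by
  rw [c13, if_neg (by simp [hi]), if_neg hi, if_pos rfl]

lemma c13_ne (t : ℂ) (i j : ℕ+) (hi : i ≠ 2) (hj : j ≠ 2) :
    c13 t i j = (((j : ℕ) : ℂ) - ((i : ℕ) : ℂ)) • Finsupp.single (i + j) (1 : ℂ) := by
  rw [c13, if_neg (by simp [hi]), if_neg hi, if_neg hj]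

/-- Commutator of two endomorphisms. -/
def brE (a b : (ℕ →₀ ℂ) →ₗ[ℂ] (ℕ →₀ ℂ)) : (ℕ →₀ ℂ) →ₗ[ℂ] (ℕ →₀ ℂ) :=
  a ∘ₗ b - b ∘ₗ a

lemma brE_apply (a b : (ℕ →₀ ℂ) →ₗ[ℂ] (ℕ →₀ ℂ)) (x : ℕ →₀ ℂ) :
    brE a b x = a (b x) - b (a x) := rfl

lemma brE_self (a : (ℕ →₀ ℂ) →ₗ[ℂ] (ℕ →₀ ℂ)) : brE a a = 0 := by
  apply LinearMap.ext; intro v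
  show a (a v) - a (a v) = 0
  rw [sub_self]

lemma brE_zero_left (b : (ℕ →₀ ℂ) →ₗ[ℂ] (ℕ →₀ ℂ)) : brE 0 b = 0 := by
  apply LinearMap.ext; intro v
  show (0 : (ℕ →₀ ℂ) →ₗ[ℂ] (ℕ →₀ ℂ)) (b v) - b ((0 : (ℕ →₀ ℂ) →ₗ[ℂ] (ℕ →₀ ℂ)) v) = 0
  simp

lemma brE_zero_right (a : (ℕ →₀ ℂ) →ₗ[ℂ] (ℕ →₀ ℂ)) : brE a 0 = 0 := by
  apply LinearMap.ext; intro v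
  show a ((0 : (ℕ →₀ ℂ) →ₗ[ℂ] (ℕ →₀ ℂ)) v) - (0 : (ℕ →₀ ℂ) →ₗ[ℂ] (ℕ →₀ ℂ)) (a v) = 0
  simp

lemma brE_add_left (a b c : (ℕ →₀ ℂ) →ₗ[ℂ] (ℕ →₀ ℂ)) : brE (a + b) c = brE a c + brE b c := by
  apply LinearMap.ext; intro v
  show (a + b) (c v) - c ((a + b) v) = (a (c v) - c (a v)) + (b (c v) - c (b v))
  rw [LinearMap.add_apply, LinearMap.add_apply, map_add]
  abel

lemma brE_add_right (a b c : (ℕ →₀ ℂ) →ₗ[ℂ] (ℕ →₀ ℂ)) : brE a (b + c) = brE a b + brE a c := by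
  apply LinearMap.ext; intro v
  show a ((b + c) v) - (b + c) (a v) = (a (b v) - b (a v)) + (a (c v) - c (a v))
  rw [LinearMap.add_apply, LinearMap.add_apply, map_add]
  abel

lemma brE_smul_left (r : ℂ) (a b : (ℕ →₀ ℂ) →ₗ[ℂ] (ℕ →₀ ℂ)) : brE (r • a) b = r • brE a b := by
  apply LinearMap.ext; intro v
  show (r • a) (b v) - b ((r • a) v) = r • (a (b v) - b (a v))
  rw [LinearMap.smul_apply, LinearMap.smul_apply, map_smul, smul_sub]

lemma brE_smul_right (r : ℂ) (a b : (ℕ →₀ ℂ) →ₗ[ℂ] (ℕ →₀ ℂ)) : brE a (r • b) = r • brE a b := by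
  apply LinearMap.ext; intro v
  show a ((r • b) v) - (r • b) (a v) = r • (a (b v) - b (a v))
  rw [LinearMap.smul_apply, LinearMap.smul_apply, map_smul, smul_sub]

lemma brE_skew (a b : (ℕ →₀ ℂ) →ₗ[ℂ] (ℕ →₀ ℂ)) : brE a b = -brE b a := by
  apply LinearMap.ext; intro v
  show a (b v) - b (a v) = (-(brE b a)) v
  rw [LinearMap.neg_apply, brE_apply, neg_sub]

lemma brE_jacobi (a b c : (ℕ →₀ ℂ) →ₗ[ℂ] (ℕ →₀ ℂ)) :
    brE (brE a b) c + brE (brE b c) a + brE (brE c a) b = 0 := by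
  apply LinearMap.ext; intro v
  show (brE a b) (c v) - c ((brE a b) v) + ((brE b c) (a v) - a ((brE b c) v))
      + ((brE c a) (b v) - b ((brE c a) v)) = 0
  simp only [brE_apply, map_sub]
  abel

/-- The operator `x^{n+1} d/dx` on polynomials (represented as `ℕ →₀ ℂ`). -/
def Wop (n : ℕ) : (ℕ →₀ ℂ) →ₗ[ℂ] (ℕ →₀ ℂ) :=
  Finsupp.lsum ℂ fun m => LinearMap.toSpanSingleton ℂ _ ((m : ℂ) • Finsupp.single (m + n) (1 : ℂ))

lemma Wop_single (n m : ℕ) (c : ℂ) :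
    Wop n (Finsupp.single m c) = (c * m) • Finsupp.single (m + n) (1 : ℂ) := by
  simp [Wop, LinearMap.toSpanSingleton_apply, mul_smul]

lemma Wop_comm (a b : ℕ) : brE (Wop a) (Wop b) = ((b : ℂ) - (a : ℂ)) • Wop (a + b) := by
  apply Finsupp.lhom_ext
  intro m c
  have h1 : m + b + a = m + (a + b) := by ring
  have h2 : m + a + b = m + (a + b) := by ring
  simp only [brE_apply, map_smul, Wop_single, LinearMap.smul_apply, smul_smul, h1, h2,
    ← sub_smul]
  congr 1
  push_cast
  ring

/-- Representation of the deformed basis vector `e_n`. -/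
def Wt (t : ℂ) (n : ℕ+) : (ℕ →₀ ℂ) →ₗ[ℂ] (ℕ →₀ ℂ) :=
  Wop (n : ℕ) + (if n = 2 then t • Wop 0 else 0)

/-- The representation map. -/
def theta (t : ℂ) : (ℕ+ →₀ ℂ) →ₗ[ℂ] ((ℕ →₀ ℂ) →ₗ[ℂ] (ℕ →₀ ℂ)) :=
  Finsupp.lsum ℂ fun n => LinearMap.toSpanSingleton ℂ _ (Wt t n)

lemma theta_single (t : ℂ) (n : ℕ+) (c : ℂ) :
    theta t (Finsupp.single n c) = c • Wt t n := by
  simp [theta, LinearMap.toSpanSingleton_apply]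

lemma Wt_ne_two (t : ℂ) (n : ℕ+) (h : n ≠ 2) : Wt t n = Wop (n : ℕ) := by
  simp [Wt, h]

lemma Wt_two (t : ℂ) : Wt t 2 = Wop 2 + t • Wop 0 := by
  norm_num [Wt]

lemma pnat_two : ((2 : ℕ+) : ℕ) = 2 := rfl
lemma pnat_one : ((1 : ℕ+) : ℕ) = 1 := rfl

lemma add_two_ne_two (j : ℕ+) : j + 2 ≠ (2 : ℕ+) := by
  intro h
  have h2 := congrArg (PNat.val) h
  rw [PNat.add_coe] at h2
  have := j.pos
  rw [pnat_two] at h2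
  omega

lemma theta_c13 (t : ℂ) (i j : ℕ+) : theta t (c13 t i j) = brE (Wt t i) (Wt t j) := by
  by_cases hi : i = 2 <;> by_cases hj : j = 2
  · subst hi; subst hj
    rw [c13_two_two, map_zero, brE_self]
  · subst hi
    rw [c13_two_left t j hj, map_add, map_smul, map_smul, theta_single, theta_single, one_smul,
      one_smul, Wt_ne_two t _ (add_two_ne_two j), Wt_ne_two t _ hj, Wt_two, brE_add_left,
      brE_smul_left, Wop_comm, Wop_comm]
    rw [show ((j+2:ℕ+):ℕ) = 2 + (j:ℕ) by rw [PNat.add_coe, pnat_two]; omega]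
    push_cast
    rw [show ((0:ℕ)+(j:ℕ)) = (j:ℕ) by ring]
    module
  · subst hj
    rw [c13_two_right t i hi, map_neg, map_add, map_smul, map_smul, theta_single, theta_single,
      one_smul, one_smul, Wt_ne_two t _ (add_two_ne_two i), Wt_ne_two t _ hi, Wt_two,
      brE_add_right, brE_smul_right, Wop_comm, Wop_comm]
    rw [show ((i+2:ℕ+):ℕ) = (i:ℕ) + 2 by rw [PNat.add_coe, pnat_two]]
    push_cast
    rw [show ((i:ℕ)+(0:ℕ)) = (i:ℕ) by ring]
    module
  · rw [c13_ne t i j hi hj, map_smul, theta_single, one_smul]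
    by_cases hij : i + j = 2
    · have h2 := congrArg (PNat.val) hij
      rw [PNat.add_coe, pnat_two] at h2
      have hip := i.pos; have hjp := j.pos
      have hi1 : i = 1 := PNat.coe_injective (by rw [pnat_one]; omega)
      have hj1 : j = 1 := PNat.coe_injective (by rw [pnat_one]; omega)
      subst hi1; subst hj1
      rw [brE_self, sub_self, zero_smul]
    · rw [Wt_ne_two t _ hij, Wt_ne_two t _ hi, Wt_ne_two t _ hj, Wop_comm, PNat.add_coe]

lemma L1br3_single (t : ℂ) (i j : ℕ+) :
    L1br3 t (Finsupp.single i 1) (Finsupp.single j 1) = c13 t i j := by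
  simp [L1br3, LinearMap.toSpanSingleton_apply]

lemma theta_br (t : ℂ) (x y : ℕ+ →₀ ℂ) :
    theta t (L1br3 t x y) = brE (theta t x) (theta t y) := by
  induction x using Finsupp.induction_linear with
  | zero => simp only [map_zero, LinearMap.zero_apply, brE_zero_left]
  | add a b ha hb =>
    simp only [map_add, LinearMap.add_apply, ha, hb, brE_add_left]
  | single n c =>
    induction y using Finsupp.induction_linear with
    | zero => simp only [map_zero, LinearMap.map_zero, brE_zero_right]
    | add a b ha hb =>
      simp only [map_add, ha, hb, brE_add_right]
    | single m d =>
      rw [show (Finsupp.single n c : ℕ+ →₀ ℂ) = c • Finsupp.single n 1 by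
            simp [Finsupp.smul_single'],
          show (Finsupp.single m d : ℕ+ →₀ ℂ) = d • Finsupp.single m 1 by
            simp [Finsupp.smul_single']]
      simp only [map_smul, LinearMap.smul_apply]
      rw [L1br3_single, theta_c13, theta_single, theta_single, one_smul, one_smul,
        brE_smul_left, brE_smul_right, smul_comm]

lemma theta_coeff (t : ℂ) (x : ℕ+ →₀ ℂ) (m : ℕ+) :
    (theta t x (Finsupp.single 1 1)) (1 + (m : ℕ)) = x m := by
  induction x using Finsupp.induction_linear with
  | zero => simp
  | add a b ha hb => simp [map_add, ha, hb]
  | single n c =>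
    have hm1 : ¬ ((1:ℕ) + 0 = 1 + (m:ℕ)) := by have := m.pos; omega
    rw [theta_single, Finsupp.single_apply]
    by_cases hn : n = 2
    · subst hn
      rw [Wt_two]
      simp only [LinearMap.smul_apply, LinearMap.add_apply, Wop_single, Nat.cast_one, one_mul,
        one_smul, Finsupp.smul_apply, Finsupp.add_apply, Finsupp.single_apply]
      rw [if_neg hm1]
      by_cases h : (2:ℕ+) = m
      · rw [if_pos h, if_pos (by rw [← h, pnat_two]), smul_eq_mul, smul_eq_mul]
        ring
      · rw [if_neg h, if_neg (fun hh => h (PNat.coe_injective (by rw [pnat_two]; omega)))]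
        simp
    · rw [Wt_ne_two t n hn]
      simp only [LinearMap.smul_apply, Wop_single, Nat.cast_one, one_mul, one_smul,
        Finsupp.smul_apply, Finsupp.single_apply]
      by_cases h : n = m
      · rw [if_pos h, if_pos (by rw [h]), smul_eq_mul, mul_one]
      · rw [if_neg h, if_neg (fun hh => h (PNat.coe_injective (by omega))), smul_zero]

lemma theta_inj (t : ℂ) : Function.Injective (theta t) := by
  intro x y h
  ext m
  rw [← theta_coeff t x m, ← theta_coeff t y m, h]

end Stmt13Aux

/-- for each `t ∈ ℂ` the bracket `[·,·]³_t` (modifying the `L₁` bracket only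
when one index equals `2`) is skew-symmetric and satisfies the Jacobi identity. -/
theorem stmt_13 (t : ℂ) :
    (∀ j : ℕ+, j ≠ 2 → L1br3 t (Finsupp.single 2 1) (Finsupp.single j 1) =
      (((j : ℕ) : ℂ) - 2) • Finsupp.single (j + 2) (1 : ℂ)
        + (t * ((j : ℕ) : ℂ)) • Finsupp.single j (1 : ℂ)) ∧
    (∀ i j : ℕ+, i ≠ 2 → j ≠ 2 → L1br3 t (Finsupp.single i 1) (Finsupp.single j 1) =
      (((j : ℕ) : ℂ) - ((i : ℕ) : ℂ)) • Finsupp.single (i + j) (1 : ℂ)) ∧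
    (∀ x y : ℕ+ →₀ ℂ, L1br3 t x y = -L1br3 t y x) ∧
    (∀ x y z : ℕ+ →₀ ℂ,
      L1br3 t (L1br3 t x y) z + L1br3 t (L1br3 t y z) x + L1br3 t (L1br3 t z x) y = 0) := by
  refine ⟨?_, ?_, ?_, ?_⟩
  · intro j hj
    rw [L1br3_single, c13_two_left t j hj]
  · intro i j hi hj
    rw [L1br3_single, c13_ne t i j hi hj]
  · intro x y
    apply theta_inj t
    rw [map_neg, theta_br, theta_br, brE_skew]
  · intro x y z
    apply theta_inj t
    rw [map_add, map_add, theta_br, theta_br, theta_br, theta_br, theta_br, theta_br, map_zero]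
    exact brE_jacobi _ _ _
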